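/- arXiv:0810.3724 — 3 statements merged into one kernel-verified Lean document; each statement's English description precedes it below -/
import Mathlib

section
/- With the same setting (U ∈ ℝ^{N×K} with orthonormal columns, partition into clusters I_1,…,I_K, centers c⁽ᵏ⁾, total variation TV(U)), it holds that Σ_{1≤k<ℓ≤K} N_k N_ℓ ⟨c⁽ᵏ⁾, c⁽ℓ⁾⟩² ≤ TV(U). -/
open Matrix Finset

/-- For two symmetric idempotent matrices, `trace (PQPQ) ≤ trace (PQ)`. -/
lemma trace_proj_mul_proj_le {n : ℕ} (P Q : Matrix (Fin n) (Fin n) ℝ)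
    (hPP : P * P = P) (hPt : Pᵀ = P) (hQQ : Q * Q = Q) (hQt : Qᵀ = Q) :
    Matrix.trace (P * Q * (P * Q)) ≤ Matrix.trace (P * Q) := by
  set A : Matrix (Fin n) (Fin n) ℝ := P * Q with hA
  have e1 : Matrix.trace (A * A) = ∑ p : Fin n × Fin n, A p.1 p.2 * A p.2 p.1 := by
    rw [Fintype.sum_prod_type]
    simp [Matrix.trace, Matrix.mul_apply, Matrix.diag]
  have hAtA : Aᵀ * A = Q * A := by
    rw [hA, Matrix.transpose_mul, hPt, hQt, Matrix.mul_assoc, ← Matrix.mul_assoc P P Q,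
      hPP]
  have e2 : ∑ p : Fin n × Fin n, (A p.1 p.2) ^ 2 = Matrix.trace A := by
    have h : Matrix.trace (Aᵀ * A) = ∑ p : Fin n × Fin n, (A p.1 p.2) ^ 2 := by
      rw [Fintype.sum_prod_type, Finset.sum_comm]
      simp [Matrix.trace, Matrix.mul_apply, Matrix.diag, sq]
    rw [← h, hAtA, Matrix.trace_mul_comm, hA, Matrix.mul_assoc, hQQ]
  have e3 : ∑ p : Fin n × Fin n, (A p.2 p.1) ^ 2 = Matrix.trace A := by
    rw [← e2, Fintype.sum_prod_type, Fintype.sum_prod_type, Finset.sum_comm]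
  have hApos : 0 ≤ Matrix.trace A := by
    rw [← e2]
    exact Finset.sum_nonneg fun p _ => sq_nonneg _
  have cs := Finset.sum_mul_sq_le_sq_mul_sq (univ : Finset (Fin n × Fin n))
      (fun p => A p.1 p.2) (fun p => A p.2 p.1)
  rw [e2, e3] at cs
  calc Matrix.trace (A * A) = ∑ p : Fin n × Fin n, A p.1 p.2 * A p.2 p.1 := e1
    _ ≤ Matrix.trace A := by nlinarith [cs, hApos]

theorem stmt4 (N K : ℕ) (U : Matrix (Fin N) (Fin K) ℝ) (hU : Uᵀ * U = 1)
    (cl : Fin N → Fin K) (hcl : ∀ k, ∃ i, cl i = k)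
    (Nk : Fin K → ℝ) (hNk : ∀ k, Nk k = ((univ.filter (fun i => cl i = k)).card : ℝ))
    (c : Fin K → Fin K → ℝ)
    (hc : ∀ k j, c k j = (∑ i ∈ univ.filter (fun i => cl i = k), U i j) / Nk k)
    (TV : ℝ)
    (hTV : TV = ∑ k, ∑ i ∈ univ.filter (fun i => cl i = k), ∑ j, (U i j - c k j) ^ 2) :
    ∑ p ∈ univ.filter (fun p : Fin K × Fin K => p.1 < p.2),
      Nk p.1 * Nk p.2 * (∑ j, c p.1 j * c p.2 j) ^ 2 ≤ TV := by
  -- cluster sizes are positive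
  have hNkpos : ∀ k, 0 < Nk k := by
    intro k
    rw [hNk k]
    have : (univ.filter (fun i => cl i = k)).Nonempty := by
      obtain ⟨i, hi⟩ := hcl k
      exact ⟨i, by simp [hi]⟩
    exact_mod_cast Finset.card_pos.mpr this
  set s : Fin K → ℝ := fun k => Real.sqrt (Nk k) with hs
  have hspos : ∀ k, 0 < s k := fun k => Real.sqrt_pos.mpr (hNkpos k)
  have hss : ∀ k, s k * s k = Nk k := fun k => Real.mul_self_sqrt (hNkpos k).le
  -- sums over a cluster
  have hsumc : ∀ k j, ∑ i ∈ univ.filter (fun i => cl i = k), U i j = Nk k * c k j := by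
    intro k j
    rw [hc k j, mul_comm, div_mul_cancel₀ _ (hNkpos k).ne']
  -- the normalized indicator matrix
  set W : Matrix (Fin N) (Fin K) ℝ := fun i k => if cl i = k then (s k)⁻¹ else 0 with hW
  have hWW : Wᵀ * W = 1 := by
    ext k l
    rw [Matrix.mul_apply]
    simp only [Matrix.transpose_apply]; simp only [hW]
    by_cases hkl : k = l
    · subst hkl
      have h1 : ∀ i : Fin N, (if cl i = k then (s k)⁻¹ else 0) * (if cl i = k then (s k)⁻¹ else 0)
          = if cl i = k then (s k)⁻¹ * (s k)⁻¹ else 0 := by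
        intro i; split <;> simp
      rw [Finset.sum_congr rfl (fun i _ => h1 i), ← Finset.sum_filter]
      simp only [Finset.sum_const, nsmul_eq_mul, Matrix.one_apply_eq]
      rw [← hNk k, ← hss k]
      have hsk := (hspos k).ne'
      field_simp
    · have h1 : ∀ i : Fin N,
          (if cl i = k then (s k)⁻¹ else 0) * (if cl i = l then (s l)⁻¹ else 0) = 0 := by
        intro i
        by_cases h2 : cl i = k
        · have h3 : ¬ (cl i = l) := by rw [h2]; exact hkl
          rw [if_pos h2, if_neg h3, mul_zero]
        · rw [if_neg h2, zero_mul]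
      rw [Finset.sum_congr rfl (fun i _ => h1 i)]
      simp [Matrix.one_apply_ne hkl]
  set P : Matrix (Fin N) (Fin N) ℝ := U * Uᵀ with hP
  have hPP : P * P = P := by
    rw [hP, Matrix.mul_assoc, ← Matrix.mul_assoc Uᵀ, hU, Matrix.one_mul]
  have hPt : Pᵀ = P := by rw [hP, Matrix.transpose_mul, Matrix.transpose_transpose]
  set Q : Matrix (Fin N) (Fin N) ℝ := W * Wᵀ with hQ
  have hQQ : Q * Q = Q := by
    rw [hQ, Matrix.mul_assoc, ← Matrix.mul_assoc Wᵀ, hWW, Matrix.one_mul]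
  have hQt : Qᵀ = Q := by rw [hQ, Matrix.transpose_mul, Matrix.transpose_transpose]
  set V : Matrix (Fin K) (Fin K) ℝ := Wᵀ * U with hV
  set G : Matrix (Fin K) (Fin K) ℝ := V * Vᵀ with hG
  -- entries of V
  have hVe : ∀ k j, V k j = s k * c k j := by
    intro k j
    rw [hV, Matrix.mul_apply]
    simp only [Matrix.transpose_apply]; simp only [hW]
    have h1 : ∀ i : Fin N, (if cl i = k then (s k)⁻¹ else 0) * U i j
        = if cl i = k then (s k)⁻¹ * U i j else 0 := by intro i; split <;> simp
    rw [Finset.sum_congr rfl (fun i _ => h1 i), ← Finset.sum_filter,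
      ← Finset.mul_sum, hsumc k j, ← hss k]
    have hsk := (hspos k).ne'
    field_simp
  -- entries of G
  have hGe : ∀ k l, G k l = s k * s l * ∑ j, c k j * c l j := by
    intro k l
    rw [hG, Matrix.mul_apply, Finset.mul_sum]
    apply Finset.sum_congr rfl
    intro j _
    rw [Matrix.transpose_apply, hVe, hVe]
    ring
  -- G = Wᵀ * P * W
  have hGWPW : G = Wᵀ * P * W := by
    rw [hG, hV, Matrix.transpose_mul, Matrix.transpose_transpose]
    simp only [hP, Matrix.mul_assoc]
  -- G is symmetric
  have hGt : ∀ k l, G k l = G l k := by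
    intro k l
    rw [hGe, hGe, mul_comm (s k) (s l)]
    congr 1
    exact Finset.sum_congr rfl (fun j _ => mul_comm _ _)
  -- goal terms are squares of entries of G
  have hgoal : ∀ k l, Nk k * Nk l * (∑ j, c k j * c l j) ^ 2 = (G k l) ^ 2 := by
    intro k l
    rw [hGe, ← hss k, ← hss l]
    ring
  -- diagonal entries
  have hGd : ∀ k, G k k = Nk k * ∑ j, c k j ^ 2 := by
    intro k
    rw [hGe, hss]
    congr 1
    exact Finset.sum_congr rfl (fun j _ => (pow_two (c k j)).symm)
  -- G k k ≥ 0
  have hG0 : ∀ k, 0 ≤ G k k := by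
    intro k
    rw [hG, Matrix.mul_apply]
    exact Finset.sum_nonneg fun j _ => by
      rw [Matrix.transpose_apply]; exact mul_self_nonneg _
  -- G k k ≤ 1 : via 1 - G = Mᵀ M with M = (1 - P) * W
  have hG1 : ∀ k, G k k ≤ 1 := by
    intro k
    set M : Matrix (Fin N) (Fin K) ℝ := (1 - P) * W with hM
    have hMt : Mᵀ = Wᵀ * (1 - P) := by
      rw [hM, Matrix.transpose_mul, Matrix.transpose_sub, Matrix.transpose_one, hPt]
    have h1P : (1 - P) * (1 - P) = 1 - P := by
      have hexp : (1 - P) * (1 - P) = 1 - P - P + P * P := by noncomm_ring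
      rw [hexp, hPP]
      abel
    have key : Mᵀ * M = 1 - G := by
      rw [hMt, hM, Matrix.mul_assoc, ← Matrix.mul_assoc (1 - P) (1 - P) W, h1P,
        Matrix.sub_mul, Matrix.one_mul, Matrix.mul_sub, hWW, ← Matrix.mul_assoc, ← hGWPW]
    have h0 : 0 ≤ (Mᵀ * M) k k := by
      rw [Matrix.mul_apply]
      exact Finset.sum_nonneg fun j _ => by
        rw [Matrix.transpose_apply]; exact mul_self_nonneg _
    rw [key] at h0
    have h1 : ((1 : Matrix (Fin K) (Fin K) ℝ) - G) k k = 1 - G k k := by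
      simp [Matrix.sub_apply, Matrix.one_apply_eq]
    rw [h1] at h0
    linarith
  -- trace of G
  have htrG : Matrix.trace G = Matrix.trace (P * Q) := by
    rw [hGWPW, Matrix.mul_assoc, Matrix.trace_mul_comm, Matrix.mul_assoc, ← hQ]
  -- trace of G*G
  have htrGG : Matrix.trace (G * G) = Matrix.trace (P * Q * (P * Q)) := by
    rw [hGWPW]
    have h1 : Wᵀ * P * W * (Wᵀ * P * W) = Wᵀ * (P * (W * (Wᵀ * (P * W)))) := by
      simp only [Matrix.mul_assoc]
    rw [h1, Matrix.trace_mul_comm]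
    have h2 : P * (W * (Wᵀ * (P * W))) * Wᵀ = P * Q * (P * Q) := by
      rw [hQ]
      simp only [Matrix.mul_assoc]
    rw [h2]
  -- the key spectral inequality
  have hkey : Matrix.trace (G * G) ≤ Matrix.trace G := by
    rw [htrG, htrGG]
    exact trace_proj_mul_proj_le P Q hPP hPt hQQ hQt
  -- trace G * G as a double sum of squares
  have htrGGsum : Matrix.trace (G * G) = ∑ k, ∑ l, (G k l) ^ 2 := by
    simp only [Matrix.trace, Matrix.diag, Matrix.mul_apply]
    apply Finset.sum_congr rfl
    intro k _
    apply Finset.sum_congr rfl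
    intro l _
    rw [← hGt k l]
    exact (pow_two _).symm
  have htrGsum : Matrix.trace G = ∑ k, G k k := by simp [Matrix.trace, Matrix.diag]
  -- TV = K - trace G
  have hTVeq : TV = (K : ℝ) - ∑ k, G k k := by
    have expand : ∀ k, ∑ i ∈ univ.filter (fun i => cl i = k), ∑ j, (U i j - c k j) ^ 2
        = (∑ i ∈ univ.filter (fun i => cl i = k), ∑ j, U i j ^ 2) - Nk k * ∑ j, c k j ^ 2 := by
      intro k
      have inner : ∀ j, ∑ i ∈ univ.filter (fun i => cl i = k), (U i j - c k j) ^ 2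
          = (∑ i ∈ univ.filter (fun i => cl i = k), U i j ^ 2) - Nk k * c k j ^ 2 := by
        intro j
        have h1 : ∀ i : Fin N, (U i j - c k j) ^ 2
            = U i j ^ 2 - 2 * c k j * U i j + c k j ^ 2 := fun i => by ring
        rw [Finset.sum_congr rfl fun i _ => h1 i, Finset.sum_add_distrib,
          Finset.sum_sub_distrib, Finset.sum_const, ← Finset.mul_sum, hsumc k j,
          nsmul_eq_mul, ← hNk k]
        ring
      calc ∑ i ∈ univ.filter (fun i => cl i = k), ∑ j, (U i j - c k j) ^ 2
          = ∑ j, ∑ i ∈ univ.filter (fun i => cl i = k), (U i j - c k j) ^ 2 :=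
            Finset.sum_comm
        _ = ∑ j, ((∑ i ∈ univ.filter (fun i => cl i = k), U i j ^ 2) - Nk k * c k j ^ 2) :=
            Finset.sum_congr rfl fun j _ => inner j
        _ = (∑ j, ∑ i ∈ univ.filter (fun i => cl i = k), U i j ^ 2) - Nk k * ∑ j, c k j ^ 2 := by
            rw [Finset.sum_sub_distrib, Finset.mul_sum]
        _ = (∑ i ∈ univ.filter (fun i => cl i = k), ∑ j, U i j ^ 2) - Nk k * ∑ j, c k j ^ 2 := by
            rw [Finset.sum_comm]
    rw [hTV, Finset.sum_congr rfl (fun k _ => expand k), Finset.sum_sub_distrib]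
    have hKsum : ∑ k, ∑ i ∈ univ.filter (fun i => cl i = k), ∑ j, U i j ^ 2 = (K : ℝ) := by
      rw [Finset.sum_fiberwise univ cl (fun i => ∑ j, U i j ^ 2)]
      have h : ∑ i, ∑ j, U i j ^ 2 = Matrix.trace (Uᵀ * U) := by
        rw [Finset.sum_comm]
        simp [Matrix.trace, Matrix.diag, Matrix.mul_apply, sq]
      rw [h, hU]
      simp
    rw [hKsum]
    congr 1
    exact Finset.sum_congr rfl fun k _ => (hGd k).symm
  -- rewrite goal in terms of G
  rw [Finset.sum_congr rfl (fun p _ => hgoal p.1 p.2), hTVeq]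
  -- split the full double sum into diagonal, lower, upper parts
  set L : ℝ := ∑ p ∈ univ.filter (fun p : Fin K × Fin K => p.1 < p.2), (G p.1 p.2) ^ 2 with hL
  have hsplit : ∑ k, ∑ l, (G k l) ^ 2 = (∑ k, (G k k) ^ 2) + 2 * L := by
    have hall : ∑ k, ∑ l, (G k l) ^ 2 = ∑ p : Fin K × Fin K, (G p.1 p.2) ^ 2 := by
      rw [Fintype.sum_prod_type]
    rw [hall]
    rw [← Finset.sum_filter_add_sum_filter_not univ (fun p : Fin K × Fin K => p.1 = p.2)
      (fun p => (G p.1 p.2) ^ 2)]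
    have hdiag : ∑ p ∈ univ.filter (fun p : Fin K × Fin K => p.1 = p.2), (G p.1 p.2) ^ 2
        = ∑ k, (G k k) ^ 2 := by
      rw [show (univ.filter (fun p : Fin K × Fin K => p.1 = p.2)) = Finset.diag univ by ext p; simp [Finset.mem_diag]]
      exact Finset.sum_diag univ (fun p => (G p.1 p.2) ^ 2)
    have hoff : ∑ p ∈ univ.filter (fun p : Fin K × Fin K => ¬ p.1 = p.2), (G p.1 p.2) ^ 2
        = 2 * L := by
      rw [← Finset.sum_filter_add_sum_filter_not
        (univ.filter (fun p : Fin K × Fin K => ¬ p.1 = p.2))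
        (fun p : Fin K × Fin K => p.1 < p.2) (fun p => (G p.1 p.2) ^ 2)]
      have e1 : (univ.filter (fun p : Fin K × Fin K => ¬ p.1 = p.2)).filter
          (fun p => p.1 < p.2) = univ.filter (fun p : Fin K × Fin K => p.1 < p.2) := by
        ext p
        simp only [Finset.mem_filter, Finset.mem_univ, true_and]
        exact ⟨fun h => h.2, fun h => ⟨ne_of_lt h, h⟩⟩
      have e2 : (univ.filter (fun p : Fin K × Fin K => ¬ p.1 = p.2)).filter
          (fun p => ¬ p.1 < p.2) = univ.filter (fun p : Fin K × Fin K => p.2 < p.1) := by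
        ext p
        simp only [Finset.mem_filter, Finset.mem_univ, true_and]
        constructor
        · rintro ⟨hne, hnlt⟩
          exact lt_of_le_of_ne (not_lt.mp hnlt) (Ne.symm hne)
        · intro h
          exact ⟨fun he => absurd he.symm (ne_of_lt h), not_lt.mpr h.le⟩
      have e3 : ∑ p ∈ univ.filter (fun p : Fin K × Fin K => p.2 < p.1), (G p.1 p.2) ^ 2
          = L := by
        rw [hL]
        apply Finset.sum_nbij' (fun p : Fin K × Fin K => p.swap)
          (fun p : Fin K × Fin K => p.swap)
        · intro p hp
          simp only [Finset.mem_filter, Finset.mem_univ, true_and] at hp ⊢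
          exact hp
        · intro p hp
          simp only [Finset.mem_filter, Finset.mem_univ, true_and] at hp ⊢
          exact hp
        · intro p _; exact Prod.swap_swap p
        · intro p _; exact Prod.swap_swap p
        · intro p _
          simp only [Prod.fst_swap, Prod.snd_swap]
          rw [hGt p.1 p.2]
      rw [e1, e2, e3, hL]
      ring
    rw [hdiag, hoff]
  -- finish with elementary arithmetic
  rw [htrGGsum, htrGsum] at hkey
  have hptwise : ∑ k, (3 * G k k - (G k k) ^ 2) ≤ ∑ _k : Fin K, (2 : ℝ) := by
    apply Finset.sum_le_sum
    intro k _
    nlinarith [hG0 k, hG1 k]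
  have hcard : ∑ _k : Fin K, (2 : ℝ) = 2 * K := by
    rw [Finset.sum_const]
    simp [mul_comm]
  rw [Finset.sum_sub_distrib] at hptwise
  rw [hcard, ← Finset.mul_sum] at hptwise
  have hsq0 : 0 ≤ ∑ k, (G k k) ^ 2 := Finset.sum_nonneg fun k _ => sq_nonneg _
  rw [hsplit] at hkey
  linarith
end

section
/- Let U ∈ ℝ^{N×K} have orthonormal columns, and let Ũ ∈ ℝ^{N×K} be the block matrix whose k-th column equals (1/√N_k) on the indices in I_k and 0 elsewhere (for a partition I_1,…,I_K of {1,…,N} with |I_k| = N_k). Then ‖UU' − ŨŨ'‖_F² = 2·TV(U), where TV(U) = Σ_{k=1}^K Σ_{i∈I_k} ‖u⁽ⁱ⁾ − c⁽ᵏ⁾‖² with c⁽ᵏ⁾ = (1/N_k)Σ_{i∈I_k} u⁽ⁱ⁾ and u⁽ⁱ⁾ the i-th row of U. -/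
open Matrix Finset

noncomputable def frobSq {m n : ℕ} (M : Matrix (Fin m) (Fin n) ℝ) : ℝ :=
  ∑ i, ∑ j, (M i j) ^ 2

theorem stmt5 (N K : ℕ) (U : Matrix (Fin N) (Fin K) ℝ) (hU : Uᵀ * U = 1)
    (cl : Fin N → Fin K) (hcl : ∀ k, ∃ i, cl i = k)
    (Nk : Fin K → ℝ) (hNk : ∀ k, Nk k = ((univ.filter (fun i => cl i = k)).card : ℝ))
    (Ut : Matrix (Fin N) (Fin K) ℝ)
    (hUt : ∀ i k, Ut i k = if cl i = k then 1 / Real.sqrt (Nk k) else 0)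
    (c : Fin K → Fin K → ℝ)
    (hc : ∀ k j, c k j = (∑ i ∈ univ.filter (fun i => cl i = k), U i j) / Nk k)
    (TV : ℝ)
    (hTV : TV = ∑ k, ∑ i ∈ univ.filter (fun i => cl i = k), ∑ j, (U i j - c k j) ^ 2) :
    frobSq (U * Uᵀ - Ut * Utᵀ) = 2 * TV := by
  have hNkpos : ∀ k, (0:ℝ) < Nk k := by
    intro k
    rw [hNk]
    have h : (univ.filter (fun i => cl i = k)).Nonempty := by
      obtain ⟨i, hi⟩ := hcl k
      exact ⟨i, by simp [hi]⟩
    exact_mod_cast Finset.card_pos.mpr h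
  have hNk0 : ∀ k, Nk k ≠ 0 := fun k => ne_of_gt (hNkpos k)
  have hsq : ∀ k, Real.sqrt (Nk k) * Real.sqrt (Nk k) = Nk k :=
    fun k => Real.mul_self_sqrt (le_of_lt (hNkpos k))
  have hsqrt0 : ∀ k, Real.sqrt (Nk k) ≠ 0 := by
    intro k
    rw [Real.sqrt_ne_zero']
    exact hNkpos k
  have hcS : ∀ k j, (∑ i ∈ univ.filter (fun i => cl i = k), U i j) = Nk k * c k j := by
    intro k j
    rw [hc, ← mul_div_assoc, mul_div_cancel_left₀ _ (hNk0 k)]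
  set W : ℝ := ∑ k, ∑ j, Nk k * (c k j) ^ 2 with hW
  -- Ut has orthonormal columns
  have hUtU : Utᵀ * Ut = 1 := by
    ext k l
    simp only [Matrix.mul_apply, Matrix.transpose_apply, hUt, Matrix.one_apply]
    by_cases h : k = l
    · subst h
      have he : ∀ i : Fin N,
          (if cl i = k then 1 / Real.sqrt (Nk k) else 0) *
            (if cl i = k then 1 / Real.sqrt (Nk k) else 0)
          = if cl i = k then (Nk k)⁻¹ else 0 := by
        intro i
        by_cases hik : cl i = k
        · rw [if_pos hik, if_pos hik, div_mul_div_comm, one_mul, hsq k, one_div]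
        · rw [if_neg hik, if_neg hik, mul_zero]
      rw [Finset.sum_congr rfl (fun i _ => he i), ← Finset.sum_filter,
        Finset.sum_const, nsmul_eq_mul, ← hNk k, mul_inv_cancel₀ (hNk0 k), if_pos rfl]
    · rw [if_neg h, Finset.sum_eq_zero]
      intro i _
      by_cases hik : cl i = k
      · have hil : cl i ≠ l := by rw [hik]; exact h
        rw [if_neg hil, mul_zero]
      · rw [if_neg hik, zero_mul]
  have hfrob : ∀ (M : Matrix (Fin N) (Fin N) ℝ), frobSq M = Matrix.trace (M * Mᵀ) := by
    intro M
    simp [frobSq, Matrix.trace, Matrix.mul_apply, Matrix.diag, sq]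
  have hsymm : (U * Uᵀ - Ut * Utᵀ)ᵀ = U * Uᵀ - Ut * Utᵀ := by
    simp [Matrix.transpose_sub, Matrix.transpose_mul]
  have hPP : Matrix.trace (U * Uᵀ * (U * Uᵀ)) = (K : ℝ) := by
    rw [Matrix.mul_assoc, Matrix.trace_mul_comm, ← Matrix.mul_assoc, hU, Matrix.one_mul,
      hU, Matrix.trace_one]
    simp
  have hQQ : Matrix.trace (Ut * Utᵀ * (Ut * Utᵀ)) = (K : ℝ) := by
    rw [Matrix.mul_assoc, Matrix.trace_mul_comm, ← Matrix.mul_assoc, hUtU, Matrix.one_mul,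
      hUtU, Matrix.trace_one]
    simp
  have hB : ∀ k j, (Utᵀ * U) k j
      = (∑ i ∈ univ.filter (fun i => cl i = k), U i j) / Real.sqrt (Nk k) := by
    intro k j
    simp only [Matrix.mul_apply, Matrix.transpose_apply, hUt]
    have he : ∀ i : Fin N,
        (if cl i = k then 1 / Real.sqrt (Nk k) else 0) * U i j
        = if cl i = k then U i j / Real.sqrt (Nk k) else 0 := by
      intro i
      by_cases hik : cl i = k
      · rw [if_pos hik, if_pos hik, div_mul_eq_mul_div, one_mul]
      · rw [if_neg hik, if_neg hik, zero_mul]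
    rw [Finset.sum_congr rfl (fun i _ => he i), ← Finset.sum_filter, ← Finset.sum_div]
  have hPQ : Matrix.trace (U * Uᵀ * (Ut * Utᵀ)) = W := by
    have h1 : U * Uᵀ * (Ut * Utᵀ) = U * (Uᵀ * Ut) * Utᵀ := by
      rw [Matrix.mul_assoc, Matrix.mul_assoc, Matrix.mul_assoc]
    rw [h1, Matrix.trace_mul_comm]
    have h2 : Utᵀ * (U * (Uᵀ * Ut)) = (Utᵀ * U) * (Utᵀ * U)ᵀ := by
      rw [Matrix.transpose_mul, Matrix.transpose_transpose, Matrix.mul_assoc]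
    rw [h2]
    have h3 : Matrix.trace ((Utᵀ * U) * (Utᵀ * U)ᵀ) = ∑ k, ∑ j, ((Utᵀ * U) k j)^2 := by
      simp only [Matrix.trace, Matrix.mul_apply, Matrix.diag, Matrix.transpose_apply, sq]
    rw [h3, hW]
    refine Finset.sum_congr rfl fun k _ => Finset.sum_congr rfl fun j _ => ?_
    rw [hB, hcS, div_pow, mul_pow, Real.sq_sqrt (hNkpos k).le, pow_two (Nk k),
      mul_assoc, mul_div_assoc, mul_div_cancel_left₀ _ (hNk0 k)]
  have hUsq : ∑ i, ∑ j, (U i j)^2 = (K : ℝ) := by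
    rw [Finset.sum_comm]
    have h1 : ∀ j : Fin K, ∑ i, (U i j)^2 = 1 := by
      intro j
      have h2 := congrFun (congrFun hU j) j
      simp only [Matrix.mul_apply, Matrix.transpose_apply, Matrix.one_apply_eq] at h2
      rw [← h2]
      exact Finset.sum_congr rfl fun i _ => pow_two (U i j)
    simp [h1]
  have hTV' : TV = (K : ℝ) - W := by
    rw [hTV]
    have expand : ∀ k, ∀ i ∈ univ.filter (fun i => cl i = k),
        ∑ j, (U i j - c k j) ^ 2
          = (∑ j, (U i j)^2) - 2 * (∑ j, U i j * c k j) + ∑ j, (c k j)^2 := by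
      intro k i _
      rw [Finset.mul_sum, ← Finset.sum_sub_distrib, ← Finset.sum_add_distrib]
      exact Finset.sum_congr rfl fun j _ => by ring
    rw [Finset.sum_congr rfl (fun k _ => Finset.sum_congr rfl (expand k))]
    have split : ∀ k, (∑ i ∈ univ.filter (fun i => cl i = k),
        ((∑ j, (U i j)^2) - 2 * (∑ j, U i j * c k j) + ∑ j, (c k j)^2))
        = (∑ i ∈ univ.filter (fun i => cl i = k), ∑ j, (U i j)^2)
          - 2 * (∑ i ∈ univ.filter (fun i => cl i = k), ∑ j, U i j * c k j)
          + (∑ i ∈ univ.filter (fun i => cl i = k), ∑ j, (c k j)^2) := by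
      intro k
      rw [Finset.sum_add_distrib, Finset.sum_sub_distrib, ← Finset.mul_sum]
    rw [Finset.sum_congr rfl (fun k _ => split k), Finset.sum_add_distrib,
      Finset.sum_sub_distrib]
    have t1 : ∑ k, ∑ i ∈ univ.filter (fun i => cl i = k), ∑ j, (U i j)^2 = (K : ℝ) := by
      rw [Finset.sum_fiberwise, hUsq]
    have t2 : ∑ k, 2 * (∑ i ∈ univ.filter (fun i => cl i = k), ∑ j, U i j * c k j)
        = 2 * W := by
      rw [← Finset.mul_sum]
      congr 1
      rw [hW]
      refine Finset.sum_congr rfl fun k _ => ?_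
      rw [Finset.sum_comm]
      refine Finset.sum_congr rfl fun j _ => ?_
      rw [← Finset.sum_mul, hcS]
      ring
    have t3 : ∑ k, ∑ i ∈ univ.filter (fun i => cl i = k), ∑ j, (c k j)^2 = W := by
      rw [hW]
      refine Finset.sum_congr rfl fun k _ => ?_
      rw [Finset.sum_const, nsmul_eq_mul, ← hNk k, Finset.mul_sum]
    rw [t1, t2, t3]
    ring
  rw [hfrob, hsymm]
  have hexp : (U * Uᵀ - Ut * Utᵀ) * (U * Uᵀ - Ut * Utᵀ)
      = U * Uᵀ * (U * Uᵀ) - U * Uᵀ * (Ut * Utᵀ)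
        - (Ut * Utᵀ * (U * Uᵀ) - Ut * Utᵀ * (Ut * Utᵀ)) := by
    rw [Matrix.sub_mul, Matrix.mul_sub, Matrix.mul_sub]
  rw [hexp, Matrix.trace_sub, Matrix.trace_sub, Matrix.trace_sub, hPP, hQQ, hPQ,
    Matrix.trace_mul_comm (Ut * Utᵀ) (U * Uᵀ), hPQ, hTV']
  ring
end

section
/- Let μ₁ be the uniform (normalized arclength) measure on the segment L1 = {(x,0) : 0 ≤ x ≤ L} and μ₂ the uniform measure on L2 = {(0,y) : 0 ≤ y ≤ L}, for fixed L > 0. For any three points p₁ = (x₁,0), p₂ = (x₂,0) ∈ L1 and q = (0,y) ∈ L2 with y > 0, the polar curvature satisfies c_p(p₁,p₂,q) ≥ √2·y, where c_p(z₁,z₂,z₃) = diam{z₁,z₂,z₃}·√(sin²∠z₁ + sin²∠z₂ + sin²∠z₃) with ∠z_i the angle of the triangle at vertex z_i. -/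
noncomputable def dist2 (a b : ℝ × ℝ) : ℝ :=
  Real.sqrt ((a.1 - b.1) ^ 2 + (a.2 - b.2) ^ 2)

/-- sine of the interior angle at vertex `z` of the triangle `z a b`. -/
noncomputable def sinAngle (z a b : ℝ × ℝ) : ℝ :=
  |(a.1 - z.1) * (b.2 - z.2) - (a.2 - z.2) * (b.1 - z.1)| / (dist2 z a * dist2 z b)

noncomputable def diam3 (a b c : ℝ × ℝ) : ℝ :=
  max (dist2 a b) (max (dist2 a c) (dist2 b c))

/-- polar curvature of three points in the plane. -/
noncomputable def polarCurv (a b c : ℝ × ℝ) : ℝ :=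
  diam3 a b c *
    Real.sqrt (sinAngle a b c ^ 2 + sinAngle b a c ^ 2 + sinAngle c a b ^ 2)

theorem stmt12 (x₁ x₂ y : ℝ) (hx₁ : 0 ≤ x₁) (hx₂ : 0 ≤ x₂) (hne : x₁ ≠ x₂)
    (hy : 0 < y) :
    Real.sqrt 2 * y ≤ polarCurv (x₁, 0) (x₂, 0) (0, y) := by
  have hA : (0:ℝ) < x₁^2 + y^2 := by positivity
  have hB : (0:ℝ) < x₂^2 + y^2 := by positivity
  have hsub : x₁ - x₂ ≠ 0 := sub_ne_zero.mpr hne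
  have hd12 : dist2 (x₁,0) (x₂,0) = |x₁ - x₂| := by
    simp [dist2, Real.sqrt_sq_eq_abs]
  have hd1q : dist2 (x₁,0) (0,y) = Real.sqrt (x₁^2 + y^2) := by
    simp [dist2]
  have hd2q : dist2 (x₂,0) (0,y) = Real.sqrt (x₂^2 + y^2) := by
    simp [dist2]
  have hs1 : sinAngle (x₁,0) (x₂,0) (0,y) = y / Real.sqrt (x₁^2 + y^2) := by
    simp only [sinAngle, hd12, hd1q]
    have h : |(x₂ - x₁) * (y - 0) - (0 - 0) * (0 - x₁)| = |x₁ - x₂| * y := by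
      rw [show (x₂ - x₁) * (y - 0) - (0 - 0) * (0 - x₁) = (x₂ - x₁) * y by ring]
      rw [abs_mul, abs_sub_comm, abs_of_pos hy]
    rw [h, mul_div_mul_left _ _ (abs_ne_zero.mpr hsub)]
  have hs2 : sinAngle (x₂,0) (x₁,0) (0,y) = y / Real.sqrt (x₂^2 + y^2) := by
    have hd21 : dist2 (x₂,0) (x₁,0) = |x₂ - x₁| := by simp [dist2, Real.sqrt_sq_eq_abs]
    simp only [sinAngle, hd21, hd2q]
    have h : |(x₁ - x₂) * (y - 0) - (0 - 0) * (0 - x₂)| = |x₂ - x₁| * y := by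
      rw [show (x₁ - x₂) * (y - 0) - (0 - 0) * (0 - x₂) = (x₁ - x₂) * y by ring]
      rw [abs_mul, abs_sub_comm, abs_of_pos hy]
    rw [h, mul_div_mul_left _ _ (abs_ne_zero.mpr (sub_ne_zero.mpr (Ne.symm hne)))]
  set sA := Real.sqrt (x₁^2 + y^2) with hsA
  set sB := Real.sqrt (x₂^2 + y^2) with hsB
  have hsApos : 0 < sA := Real.sqrt_pos.mpr hA
  have hsBpos : 0 < sB := Real.sqrt_pos.mpr hB
  have hsA2 : sA^2 = x₁^2 + y^2 := Real.sq_sqrt hA.le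
  have hsB2 : sB^2 = x₂^2 + y^2 := Real.sq_sqrt hB.le
  have hM : 0 < max sA sB := lt_max_of_lt_left hsApos
  have hdiam : max sA sB ≤ diam3 (x₁,0) (x₂,0) (0,y) := by
    unfold diam3
    rw [hd1q, hd2q]
    exact le_trans (le_refl _) (le_max_right _ _)
  have hsum : y^2/(x₁^2+y^2) + y^2/(x₂^2+y^2)
      ≤ sinAngle (x₁,0) (x₂,0) (0,y) ^ 2 + sinAngle (x₂,0) (x₁,0) (0,y) ^ 2
        + sinAngle (0,y) (x₁,0) (x₂,0) ^ 2 := by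
    rw [hs1, hs2, div_pow, div_pow, hsA2, hsB2]
    nlinarith [sq_nonneg (sinAngle (0,y) (x₁,0) (x₂,0))]
  have key : Real.sqrt 2 * y ≤ max sA sB * Real.sqrt (y^2/(x₁^2+y^2) + y^2/(x₂^2+y^2)) := by
    rw [← Real.sqrt_sq hy.le, ← Real.sqrt_sq hM.le, ← Real.sqrt_mul (by positivity),
        ← Real.sqrt_mul (by positivity)]
    apply Real.sqrt_le_sqrt
    have hM2 : (max sA sB)^2 = max (x₁^2+y^2) (x₂^2+y^2) := by
      rcases le_total sA sB with h | h
      · rw [max_eq_right h, hsB2, max_eq_right (by nlinarith)]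
      · rw [max_eq_left h, hsA2, max_eq_left (by nlinarith)]
    rw [hM2]
    have e1 : (x₁^2+y^2) * (y^2/(x₁^2+y^2)) = y^2 := by field_simp
    have e2 : (x₂^2+y^2) * (y^2/(x₂^2+y^2)) = y^2 := by field_simp
    have f1 := mul_le_mul_of_nonneg_right (le_max_left (x₁^2+y^2) (x₂^2+y^2))
      (by positivity : (0:ℝ) ≤ y^2/(x₁^2+y^2))
    have f2 := mul_le_mul_of_nonneg_right (le_max_right (x₁^2+y^2) (x₂^2+y^2))
      (by positivity : (0:ℝ) ≤ y^2/(x₂^2+y^2))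
    rw [mul_add]
    simp only [Real.sq_sqrt (sq_nonneg y)]
    linarith [f1, f2, e1, e2]
  calc Real.sqrt 2 * y ≤ max sA sB * Real.sqrt (y^2/(x₁^2+y^2) + y^2/(x₂^2+y^2)) := key
    _ ≤ polarCurv (x₁,0) (x₂,0) (0,y) := by
        unfold polarCurv
        exact mul_le_mul hdiam (Real.sqrt_le_sqrt hsum) (Real.sqrt_nonneg _)
          (le_trans hM.le hdiam)
end
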